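/- For all integers m, n ≥ 1 and k ≥ 0, one has [z_{m,n}, x^{2^k}] = z_{m+2^k,n} · z_{m,n+2^k} · z_{m+2^k,n+2^k}. (Lemma 2.1 of the paper, stated under the relations satisfied by the pro-2 group 𝔊(2).) -/
import Mathlib


namespace Paper

variable {G : Type*} [Group G]

/-- The paper's commutator `[a,b] = a⁻¹ b⁻¹ a b`. -/
def pc {G : Type*} [Group G] (a b : G) : G := a⁻¹ * b⁻¹ * a * b

/-- The left-normed iterated commutator `[a, x, (r)…, x]`. -/
def itc {G : Type*} [Group G] (x a : G) : ℕ → G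
  | 0 => a
  | r + 1 => pc (itc x a r) x

/-- `c_i`, where `c_1 = y` and `c_{i+1} = [c_i, x]`; equivalently `c_i = [y, x, (i-1)…, x]`. -/
def cc (x y : G) (i : ℕ) : G := itc x y (i - 1)

/-- `z_{m,n} = [c_m, c_n]`. -/
def zz (x y : G) (m n : ℕ) : G := pc (cc x y m) (cc x y n)

/-- `H = ⟨c_i : i ≥ 1⟩`. -/
def Hsub (x y : G) : Subgroup G :=
  Subgroup.closure {g | ∃ i, 1 ≤ i ∧ g = cc x y i}

/-- `Z = ⟨c_l², z_{m,n} : l, m, n ≥ 1⟩`. -/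
def Zsub (x y : G) : Subgroup G :=
  Subgroup.closure ({g | ∃ l, 1 ≤ l ∧ g = cc x y l ^ 2} ∪
    {g | ∃ m n, 1 ≤ m ∧ 1 ≤ n ∧ g = zz x y m n})

/-- `w_{i,j,k} = ∏_{t=1}^{2^k−1} [z_{i+t,j+t−1}, x, (2^k−1−t)…, x]`,
factors in order of increasing `t` (reindexed by `t ↦ t+1`). -/
def ww (x y : G) (i j k : ℕ) : G :=
  ((List.range (2 ^ k - 1)).map
    (fun t => itc x (zz x y (i + t + 1) (j + t)) (2 ^ k - 2 - t))).prod

/-- `L_k`, the normal closure of `{w_{i,j,k} : i,j ≥ 1} ∪ {z_{m,n} : m ≥ 2^k, n ≥ 1}`. -/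
def Lsub (x y : G) (k : ℕ) : Subgroup G :=
  Subgroup.normalClosure ({g | ∃ i j, 1 ≤ i ∧ 1 ≤ j ∧ g = ww x y i j k} ∪
    {g | ∃ m n, 2 ^ k ≤ m ∧ 1 ≤ n ∧ g = zz x y m n})

/-- `Q_k = ⟨c_l² : l ≥ 2^{k−1}⟩`. -/
def Qsub (x y : G) (k : ℕ) : Subgroup G :=
  Subgroup.closure {g | ∃ l, 2 ^ (k - 1) ≤ l ∧ g = cc x y l ^ 2}

/-- `d_k(h) = [h,x,(2^k−1)…,x]⁻¹ · x^{−2^k} · (xh)^{2^k}`. -/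
def dd (x y : G) (k : ℕ) (h : G) : G :=
  (itc x h (2 ^ k - 1))⁻¹ * (x ^ 2 ^ k)⁻¹ * (x * h) ^ 2 ^ k

/-- `Γ^{2^k} = ⟨g^{2^k} : g ∈ Γ⟩`. -/
def pow2Sub (G : Type*) [Group G] (k : ℕ) : Subgroup G :=
  Subgroup.closure {g | ∃ a : G, g = a ^ 2 ^ k}

/-- `ζ(h₁,h₂) = ∏_{ℓ=0}^{2^k−2} [h₁^x, x, (ℓ)…, x, h₂, x, (2^k−2−ℓ)…, x]`,
factors in order of increasing `ℓ`. -/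
def zeta (x : G) (k : ℕ) (h₁ h₂ : G) : G :=
  ((List.range (2 ^ k - 1)).map
    (fun l => itc x (pc (itc x (x⁻¹ * h₁ * x) l) h₂) (2 ^ k - 2 - l))).prod

lemma pc_mul_right' (a b c : G) : pc a (b*c) = pc a c * (c⁻¹ * (pc a b * c)) := by
  unfold pc; group

lemma pc_mul_left' (a b c : G) : pc (a*b) c = b⁻¹ * (pc a c * (b * pc b c)) := by
  unfold pc; group

lemma conj_eq_mul_pc (z g : G) : g⁻¹ * z * g = z * pc z g := by unfold pc; group

lemma cc_succ (x y : G) {i : ℕ} (hi : 1 ≤ i) : cc x y (i+1) = pc (cc x y i) x := by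
  obtain ⟨j, rfl⟩ := Nat.exists_eq_add_of_le hi
  show itc x y (1 + j + 1 - 1) = pc (itc x y (1 + j - 1)) x
  have h1 : 1 + j + 1 - 1 = j + 1 := by omega
  have h2 : 1 + j - 1 = j := by omega
  rw [h1, h2]; rfl

lemma conj_cc (x y : G) {i : ℕ} (hi : 1 ≤ i) :
    x⁻¹ * cc x y i * x = cc x y i * cc x y (i+1) := by
  rw [cc_succ x y hi]; unfold pc; group

lemma cc_mem (x y : G) {i : ℕ} (hi : 1 ≤ i) : cc x y i ∈ Hsub x y :=
  Subgroup.subset_closure ⟨i, hi, rfl⟩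

lemma zz_mem (x y : G) {a b : ℕ} (ha : 1 ≤ a) (hb : 1 ≤ b) : zz x y a b ∈ Zsub x y :=
  Subgroup.subset_closure (Or.inr ⟨a, b, ha, hb, rfl⟩)

lemma Z_le_H (x y : G) : Zsub x y ≤ Hsub x y := by
  rw [Zsub, Subgroup.closure_le]
  rintro g (⟨l, hl, rfl⟩ | ⟨a, b, ha, hb, rfl⟩)
  · exact pow_mem (cc_mem x y hl) 2
  · exact mul_mem (mul_mem (mul_mem (inv_mem (cc_mem x y ha)) (inv_mem (cc_mem x y hb)))
      (cc_mem x y ha)) (cc_mem x y hb)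

lemma shuffle_base {H : Type*} [CommGroup H] (hsq : ∀ a : H, a*a = 1) (z1 z2 z3 z4 : H) :
    z2 * (z1 * z2 * (z3 * z4)) = z4 * z1 * z3 := by
  have hsq2 : ∀ a b : H, a*(a*b) = b := fun a b => by rw [← mul_assoc, hsq, one_mul]
  simp [mul_comm, mul_left_comm, mul_assoc, hsq, hsq2]

lemma shuffle_step {H : Type*} [CommGroup H] (hsq : ∀ a : H, a*a = 1)
    (A B C A1 A2 B1 B2 D : H) :
    A*B*C * ((A*(A1*C*A2)) * ((B*(C*B1*B2)) * (C*(A2*B2*D)))) = A1*B1*D := by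
  have hsq2 : ∀ a b : H, a*(a*b) = b := fun a b => by rw [← mul_assoc, hsq, one_mul]
  simp [mul_comm, mul_left_comm, mul_assoc, hsq, hsq2]

theorem lemma_p_k (x y : G)
    (hca : ∀ z ∈ Zsub x y, ∀ h ∈ Hsub x y, z * h = h * z)
    (hz2 : ∀ z ∈ Zsub x y, z ^ 2 = 1)
    (m n : ℕ) (hm : 1 ≤ m) (hn : 1 ≤ n) (k : ℕ) :
    pc (zz x y m n) (x ^ 2 ^ k) =
      zz x y (m + 2 ^ k) n * zz x y m (n + 2 ^ k) * zz x y (m + 2 ^ k) (n + 2 ^ k) := by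
  have hZH := Z_le_H x y
  have conj_id : ∀ z h : G, z ∈ Zsub x y → h ∈ Hsub x y → h⁻¹ * (z * h) = z := by
    intro z h hz hh
    rw [hca z hz h hh, ← mul_assoc, inv_mul_cancel, one_mul]
  letI : CommGroup ↥(Zsub x y) :=
    { (inferInstance : Group ↥(Zsub x y)) with
      mul_comm := fun a b => Subtype.ext (hca a a.2 b (hZH b.2)) }
  have hsq : ∀ a : ↥(Zsub x y), a * a = 1 := fun a =>
    Subtype.ext (by simpa [pow_two] using hz2 a a.2)
  induction k generalizing m n with
  | zero =>
    simp only [pow_zero, pow_one]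
    have hm1 : 1 ≤ m + 1 := Nat.le_succ_of_le hm
    have hn1 : 1 ≤ n + 1 := Nat.le_succ_of_le hn
    have h2 : x⁻¹ * zz x y m n * x
        = pc (cc x y m * cc x y (m+1)) (cc x y n * cc x y (n+1)) := by
      rw [← conj_cc x y hm, ← conj_cc x y hn]; unfold zz pc; group
    have h3 : pc (cc x y m * cc x y (m+1)) (cc x y n * cc x y (n+1))
        = zz x y m (n+1) * zz x y m n * (zz x y (m+1) (n+1) * zz x y (m+1) n) := by
      rw [pc_mul_left', pc_mul_right', pc_mul_right']
      rw [conj_id (pc (cc x y m) (cc x y n)) (cc x y (n+1))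
        (zz_mem x y hm hn) (cc_mem x y hn1)]
      rw [conj_id (pc (cc x y (m+1)) (cc x y n)) (cc x y (n+1))
        (zz_mem x y hm1 hn) (cc_mem x y hn1)]
      have hw : zz x y m (n+1) * zz x y m n * (zz x y (m+1) (n+1) * zz x y (m+1) n)
          ∈ Zsub x y :=
        mul_mem (mul_mem (zz_mem x y hm hn1) (zz_mem x y hm hn))
          (mul_mem (zz_mem x y hm1 hn1) (zz_mem x y hm1 hn))
      show (cc x y (m+1))⁻¹ * (zz x y m (n+1) * zz x y m n *
          (cc x y (m+1) * (zz x y (m+1) (n+1) * zz x y (m+1) n)))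
        = zz x y m (n+1) * zz x y m n * (zz x y (m+1) (n+1) * zz x y (m+1) n)
      rw [← hca (zz x y (m+1) (n+1) * zz x y (m+1) n)
        (mul_mem (zz_mem x y hm1 hn1) (zz_mem x y hm1 hn)) (cc x y (m+1)) (cc_mem x y hm1)]
      rw [← mul_assoc (zz x y m (n+1) * zz x y m n)
        (zz x y (m+1) (n+1) * zz x y (m+1) n) (cc x y (m+1))]
      exact conj_id _ _ hw (cc_mem x y hm1)
    have h4 : pc (zz x y m n) x = (zz x y m n)⁻¹ *
        (zz x y m (n+1) * zz x y m n * (zz x y (m+1) (n+1) * zz x y (m+1) n)) := by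
      rw [← h3, ← h2]; unfold pc; group
    have hzi : (zz x y m n)⁻¹ = zz x y m n := by
      have := hz2 _ (zz_mem x y hm hn)
      rw [pow_two] at this
      exact inv_eq_of_mul_eq_one_left this
    rw [h4, hzi]
    exact congrArg Subtype.val (shuffle_base hsq
      ⟨zz x y m (n+1), zz_mem x y hm hn1⟩ ⟨zz x y m n, zz_mem x y hm hn⟩
      ⟨zz x y (m+1) (n+1), zz_mem x y hm1 hn1⟩ ⟨zz x y (m+1) n, zz_mem x y hm1 hn⟩)
  | succ k IH =>
    have h2k : 1 ≤ 2^k := Nat.one_le_two_pow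
    have hm' : 1 ≤ m + 2^k := hm.trans (Nat.le_add_right m _)
    have hn' : 1 ≤ n + 2^k := hn.trans (Nat.le_add_right n _)
    have hpow : (2:ℕ)^(k+1) = 2^k + 2^k := by rw [pow_succ]; omega
    have em : m + 2^k + 2^k = m + 2^(k+1) := by rw [pow_succ]; omega
    have en : n + 2^k + 2^k = n + 2^(k+1) := by rw [pow_succ]; omega
    rw [show x ^ 2^(k+1) = x^2^k * x^2^k by rw [hpow, pow_add],
      pc_mul_right', IH m n hm hn]
    have hc3 : (x^2^k)⁻¹ * (zz x y (m + 2^k) n * zz x y m (n + 2^k) *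
          zz x y (m + 2^k) (n + 2^k) * x^2^k)
        = zz x y (m + 2^k) n * pc (zz x y (m + 2^k) n) (x^2^k) *
          (zz x y m (n + 2^k) * pc (zz x y m (n + 2^k)) (x^2^k) *
           (zz x y (m + 2^k) (n + 2^k) * pc (zz x y (m + 2^k) (n + 2^k)) (x^2^k))) := by
      rw [← conj_eq_mul_pc, ← conj_eq_mul_pc, ← conj_eq_mul_pc]; group
    rw [hc3, IH (m + 2^k) n hm' hn, IH m (n + 2^k) hm hn', IH (m + 2^k) (n + 2^k) hm' hn']
    rw [em, en]
    exact congrArg Subtype.val (shuffle_step hsq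
      ⟨zz x y (m + 2^k) n, zz_mem x y hm' hn⟩
      ⟨zz x y m (n + 2^k), zz_mem x y hm hn'⟩
      ⟨zz x y (m + 2^k) (n + 2^k), zz_mem x y hm' hn'⟩
      ⟨zz x y (m + 2^(k+1)) n, zz_mem x y (hm.trans (Nat.le_add_right m _)) hn⟩
      ⟨zz x y (m + 2^(k+1)) (n + 2^k), zz_mem x y (hm.trans (Nat.le_add_right m _)) hn'⟩
      ⟨zz x y m (n + 2^(k+1)), zz_mem x y hm (hn.trans (Nat.le_add_right n _))⟩
      ⟨zz x y (m + 2^k) (n + 2^(k+1)), zz_mem x y hm' (hn.trans (Nat.le_add_right n _))⟩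
      ⟨zz x y (m + 2^(k+1)) (n + 2^(k+1)),
        zz_mem x y (hm.trans (Nat.le_add_right m _)) (hn.trans (Nat.le_add_right n _))⟩)

end Paper
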